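/- For integers N1 ≥ 1, N2 ≥ 1, N3 ≥ 0, the Kløve array with parameters N1, N2, N3 has aperture L = (N1+1)(N3(N1+N2) + 3N2 + 3) - 5 and exactly N = 2(2N1 + N2) + N3(N1+1) elements. -/

import Mathlib

open Pointwise

set_option maxHeartbeats 1600000 in
theorem stmt17 (N1 N2 N3 : ℕ) (h1 : 1 ≤ N1) (h2 : 1 ≤ N2)
    (D1 D2 DCNA D3 DKA : Finset ℕ) (M : ℕ)
    (hD1 : D1 = Finset.range N1)
    (hD2 : D2 = (Finset.range N2).image (fun i => i * (N1 + 1)))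
    (hCNA : DCNA = D1 ∪ D2.image (· + N1) ∪ D1.image (· + N2 * (N1 + 1)))
    (hM : M = (N1 + 1) * (N2 + 1) - 2)
    (hD3 : D3 = (Finset.range N3).biUnion
      (fun i => (Finset.range (N1 + 1)).image
        (fun j => j * N1 + i * (N1 ^ 2 + M + 1))))
    (hKA : DKA = DCNA ∪ D3.image (· + (2 * M + 1)) ∪
      DCNA.image (· + ((N3 + 2) * M + N3 * (N1 ^ 2 + 1) + 1))) :
    DKA.max = (((N1 + 1) * (N3 * (N1 + N2) + 3 * N2 + 3) - 5 : ℕ) : WithBot ℕ) ∧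
    DKA.card = 2 * (2 * N1 + N2) + N3 * (N1 + 1) := by
  have hM2 : M + 2 = (N1 + 1) * (N2 + 1) := by
    rw [hM, Nat.sub_add_cancel (by nlinarith : 2 ≤ (N1 + 1) * (N2 + 1))]
  have hSeq : (N3 + 2) * M + N3 * (N1 ^ 2 + 1) + 1
      = N3 * (N1 ^ 2 + M + 1) + 2 * M + 1 := by ring
  -- upper bound on DCNA
  have bndCNA : ∀ x ∈ DCNA, x ≤ M := by
    intro x hx
    rw [hCNA] at hx
    simp only [hD1, hD2, Finset.mem_union, Finset.mem_image, Finset.mem_range] at hx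
    rcases hx with ((h | ⟨y, ⟨i, hi, rfl⟩, rfl⟩) | ⟨j, hj, rfl⟩)
    · nlinarith
    · nlinarith
    · nlinarith
  -- M is a member of DCNA
  have memM : M ∈ DCNA := by
    have e2 : M + 2 = N2 * (N1 + 1) + N1 + 1 := by rw [hM2]; ring
    have e : M = (N1 - 1) + N2 * (N1 + 1) := by
      generalize N2 * (N1 + 1) = q at e2 ⊢
      omega
    rw [hCNA]
    refine Finset.mem_union_right _ ?_
    simp only [hD1, Finset.mem_image, Finset.mem_range]
    exact ⟨N1 - 1, by omega, e.symm⟩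
  -- cardinality of DCNA
  have cardCNA : DCNA.card = 2 * N1 + N2 := by
    rw [hCNA, Finset.card_union_of_disjoint, Finset.card_union_of_disjoint]
    · rw [hD1, hD2, Finset.card_image_of_injective _ (add_left_injective _),
        Finset.card_image_of_injective _ (add_left_injective _),
        Finset.card_image_of_injective _
          (mul_left_injective₀ (show N1 + 1 ≠ 0 by omega)),
        Finset.card_range, Finset.card_range]
      ring
    · rw [Finset.disjoint_left]
      intro x hx hx'
      simp only [hD1, hD2, Finset.mem_image, Finset.mem_range] at hx hx'
      obtain ⟨y, ⟨i, hi, rfl⟩, rfl⟩ := hx'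
      nlinarith
    · rw [Finset.disjoint_left]
      intro x hx hx'
      simp only [hD1, hD2, Finset.mem_union, Finset.mem_image, Finset.mem_range] at hx hx'
      obtain ⟨j, hj, rfl⟩ := hx'
      rcases hx with h | ⟨y, ⟨i, hi, rfl⟩, hy⟩
      · nlinarith
      · nlinarith
  -- upper bound on D3
  have bndD3 : ∀ x ∈ D3, x + M + 1 ≤ N3 * (N1 ^ 2 + M + 1) := by
    intro x hx
    rw [hD3] at hx
    simp only [Finset.mem_biUnion, Finset.mem_image, Finset.mem_range] at hx
    obtain ⟨i, hi, j, hj, rfl⟩ := hx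
    have b1 : j * N1 ≤ N1 * N1 := Nat.mul_le_mul_right _ (by omega)
    have b2 : (i + 1) * (N1 ^ 2 + M + 1) ≤ N3 * (N1 ^ 2 + M + 1) :=
      Nat.mul_le_mul_right _ (by omega)
    nlinarith
  -- cardinality of D3
  have cardD3 : D3.card = N3 * (N1 + 1) := by
    rw [hD3, Finset.card_biUnion]
    · have hc : ∀ i ∈ Finset.range N3,
          ((Finset.range (N1 + 1)).image (fun j => j * N1 + i * (N1 ^ 2 + M + 1))).card
            = N1 + 1 := by
        intro i _
        have hinj : Function.Injective (fun j : ℕ => j * N1 + i * (N1 ^ 2 + M + 1)) := by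
          intro a b hab
          simp only [add_left_inj] at hab
          exact Nat.eq_of_mul_eq_mul_right (by omega) hab
        rw [Finset.card_image_of_injective _ hinj, Finset.card_range]
      rw [Finset.sum_congr rfl hc, Finset.sum_const, Finset.card_range, smul_eq_mul]
    · intro i hi i' hi' hne
      rw [Function.onFun, Finset.disjoint_left]
      intro x hx hx'
      simp only [Finset.mem_image, Finset.mem_range] at hx hx'
      obtain ⟨j, hj, rfl⟩ := hx
      obtain ⟨j', hj', he⟩ := hx'
      have b1 : j * N1 ≤ N1 * N1 := Nat.mul_le_mul_right _ (by omega)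
      have b1' : j' * N1 ≤ N1 * N1 := Nat.mul_le_mul_right _ (by omega)
      rcases hne.lt_or_gt with h | h
      · have b2 : (i + 1) * (N1 ^ 2 + M + 1) ≤ i' * (N1 ^ 2 + M + 1) :=
          Nat.mul_le_mul_right _ (by omega)
        nlinarith
      · have b2 : (i' + 1) * (N1 ^ 2 + M + 1) ≤ i * (N1 ^ 2 + M + 1) :=
          Nat.mul_le_mul_right _ (by omega)
        nlinarith
  -- key arithmetic identity
  have key : M + ((N3 + 2) * M + N3 * (N1 ^ 2 + 1) + 1) + 5
      = (N1 + 1) * (N3 * (N1 + N2) + 3 * N2 + 3) := by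
    zify at hM2 ⊢
    linear_combination (N3 + 3 : ℤ) * hM2
  constructor
  · -- max
    have hmem : M + ((N3 + 2) * M + N3 * (N1 ^ 2 + 1) + 1) ∈ DKA := by
      rw [hKA]
      exact Finset.mem_union_right _ (Finset.mem_image.mpr ⟨M, memM, rfl⟩)
    have hub : ∀ x ∈ DKA, x ≤ M + ((N3 + 2) * M + N3 * (N1 ^ 2 + 1) + 1) := by
      intro x hx
      rw [hKA] at hx
      rcases Finset.mem_union.mp hx with h | h
      · rcases Finset.mem_union.mp h with h' | h'
        · have := bndCNA _ h'
          exact le_trans this (Nat.le_add_right _ _)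
        · obtain ⟨z, hz, rfl⟩ := Finset.mem_image.mp h'
          have := bndD3 _ hz
          linarith
      · obtain ⟨y, hy, rfl⟩ := Finset.mem_image.mp h
        have := bndCNA _ hy
        linarith
    have hmax : DKA.max = ((M + ((N3 + 2) * M + N3 * (N1 ^ 2 + 1) + 1) : ℕ) : WithBot ℕ) :=
      le_antisymm (Finset.max_le fun x hx => WithBot.coe_le_coe.mpr (hub x hx))
        (Finset.le_max hmem)
    rw [hmax]
    congr 1
    rw [← key, Nat.add_sub_cancel]
  · -- card
    rw [hKA, Finset.card_union_of_disjoint, Finset.card_union_of_disjoint]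
    · rw [Finset.card_image_of_injective _ (add_left_injective _),
        Finset.card_image_of_injective _ (add_left_injective _), cardCNA, cardD3]
      ring
    · rw [Finset.disjoint_left]
      intro x hx hx'
      obtain ⟨y, hy, rfl⟩ := Finset.mem_image.mp hx'
      have := bndCNA _ hx
      omega
    · rw [Finset.disjoint_left]
      intro x hx hx'
      obtain ⟨y, hy, rfl⟩ := Finset.mem_image.mp hx'
      have hyM := bndCNA _ hy
      rcases Finset.mem_union.mp hx with h | h
      · have := bndCNA _ h
        have hm : 1 * M ≤ (N3 + 2) * M := Nat.mul_le_mul_right M (by omega)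
        linarith [Nat.zero_le (N3 * (N1 ^ 2 + 1)), Nat.zero_le y]
      · obtain ⟨z, hz, hzx⟩ := Finset.mem_image.mp h
        have := bndD3 _ hz
        linarith
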